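/- Let F be the field of finite and cofinite subsets of ℕ, with charge μ defined by μ({n}) = 2^{−n} on finite sets (by additivity) and μ(ℕ \ S) = 5 − μ(S) for finite S. Let f_n = 1_{{1,...,n}}. Then {f_n} is Cauchy in outer charge μ* (i.e., for every δ > 0, μ*({|f_n − f_m| > δ}) → 0 as m,n → ∞), but there is no totally measurable function f with f_n → f in μ*. -/

import Mathlib

open Set ENNReal Filter Topology

/-- The field of finite and cofinite subsets of `ℕ`. -/
def cofinField : Set (Set ℕ) := {S | S.Finite ∨ Sᶜ.Finite}

/-- The weight `w n = 2^{-n}`. -/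
noncomputable def w : ℕ → ℝ≥0∞ := fun n => (2:ℝ≥0∞)⁻¹ ^ n

open Classical in
/-- The charge: `μ S = ∑_{n ∈ S} 2^{-n}` for finite `S`, and
`μ S = 5 − ∑_{n ∉ S} 2^{-n}` for cofinite `S`. -/
noncomputable def cofinCharge (S : Set ℕ) : ℝ≥0∞ :=
  if S.Finite then ∑' n : ℕ, S.indicator w n else 5 - ∑' n : ℕ, Sᶜ.indicator w n

noncomputable def outerCharge (𝓕 : Set (Set ℕ)) (μ : Set ℕ → ℝ≥0∞) (E : Set ℕ) : ℝ≥0∞ :=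
  ⨅ (F : Set ℕ) (_ : F ∈ 𝓕) (_ : E ⊆ F), μ F

/-- A simple function over the field `𝓕`. -/
def IsSimpleFn (𝓕 : Set (Set ℕ)) (g : ℕ → ℝ) : Prop :=
  (Set.range g).Finite ∧ ∀ c : ℝ, c ≠ 0 → {k | g k = c} ∈ 𝓕

/-- `g_n → g` in outer charge. -/
def TendstoInCharge (𝓕 : Set (Set ℕ)) (μ : Set ℕ → ℝ≥0∞) (g : ℕ → ℕ → ℝ) (f : ℕ → ℝ) : Prop :=
  ∀ δ : ℝ, 0 < δ →
    Tendsto (fun n => outerCharge 𝓕 μ {k | δ < |g n k - f k|}) atTop (𝓝 0)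

/-- A totally measurable function: a `μ*`-limit of simple functions. -/
def TotallyMeasurable (𝓕 : Set (Set ℕ)) (μ : Set ℕ → ℝ≥0∞) (f : ℕ → ℝ) : Prop :=
  ∃ s : ℕ → ℕ → ℝ, (∀ j, IsSimpleFn 𝓕 (s j)) ∧ TendstoInCharge 𝓕 μ s f

lemma tsum_w : ∑' n, w n = 2 := by
  simp [w, ENNReal.tsum_geometric, ENNReal.one_sub_inv_two]

lemma tsum_tail (j : ℕ) : ∑' k, (Ioi j).indicator w k = w j := by
  have hinj : Function.Injective (fun i : ℕ => i + (j+1)) := add_left_injective _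
  have hrange : Set.range (fun i : ℕ => i + (j+1)) = Ioi j := by
    ext k; simp [Set.mem_Ioi]; constructor
    · rintro ⟨y, rfl⟩; omega
    · intro h; exact ⟨k - (j+1), by omega⟩
  have hsupp : Function.support ((Ioi j).indicator w) ⊆ Set.range (fun i : ℕ => i + (j+1)) := by
    rw [hrange]; exact Set.support_indicator_subset
  rw [← hinj.tsum_eq hsupp]
  have : ∀ i : ℕ, (Ioi j).indicator w (i + (j+1)) = (2:ℝ≥0∞)⁻¹ ^ i * w (j+1) := by
    intro i
    rw [Set.indicator_of_mem (by simp [Set.mem_Ioi]; omega)]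
    simp [w, pow_add]
  simp_rw [this]
  rw [ENNReal.tsum_mul_right]
  have h2 : (∑' (i:ℕ), (2:ℝ≥0∞)⁻¹ ^ i) = 2 := tsum_w
  rw [h2]
  simp only [w, pow_succ]
  rw [mul_comm (2⁻¹ ^ j) 2⁻¹, ← mul_assoc, ENNReal.mul_inv_cancel (by norm_num) (by norm_num), one_mul]

lemma tsum_indicator_le_two (S : Set ℕ) : ∑' n, S.indicator w n ≤ 2 := by
  rw [← tsum_w]
  exact ENNReal.tsum_le_tsum fun n => Set.indicator_le_self _ _ _

lemma charge_ge_three {F : Set ℕ} (h : ¬ F.Finite) : (3:ℝ≥0∞) ≤ cofinCharge F := by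
  rw [cofinCharge, if_neg h]
  calc (3:ℝ≥0∞) = 5 - 2 := by
        rw [show (5:ℝ≥0∞) = 3 + 2 by norm_num, ENNReal.add_sub_cancel_right (by norm_num)]
    _ ≤ 5 - ∑' n, Fᶜ.indicator w n := tsub_le_tsub_left (tsum_indicator_le_two _) 5

lemma charge_ge_of_mem {F : Set ℕ} {k : ℕ} (hk : k ∈ F) : w k ≤ cofinCharge F := by
  by_cases h : F.Finite
  · rw [cofinCharge, if_pos h]
    have := ENNReal.le_tsum (f := F.indicator w) k
    rwa [Set.indicator_of_mem hk] at this
  · refine le_trans ?_ (charge_ge_three h)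
    calc w k ≤ 1 := pow_le_one' (ENNReal.inv_le_one.2 one_le_two) k
      _ ≤ 3 := by norm_num

lemma outer_le {E F : Set ℕ} (hF : F ∈ cofinField) (hEF : E ⊆ F) :
    outerCharge cofinField cofinCharge E ≤ cofinCharge F :=
  iInf_le_of_le F (iInf_le_of_le hF (iInf_le _ hEF))

lemma outer_ge_of_mem {E : Set ℕ} {k : ℕ} (hk : k ∈ E) :
    w k ≤ outerCharge cofinField cofinCharge E :=
  le_iInf fun _F => le_iInf fun _hF => le_iInf fun hEF => charge_ge_of_mem (hEF hk)

lemma finite_of_outer_lt {E : Set ℕ} (h : outerCharge cofinField cofinCharge E < 3) :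
    E.Finite := by
  simp only [outerCharge, iInf_lt_iff] at h
  obtain ⟨F, hF, hEF, hlt⟩ := h
  by_cases hfin : F.Finite
  · exact hfin.subset hEF
  · exact absurd hlt (not_lt.2 (charge_ge_three hfin))

/-- `f_n = 1_{{1,…,n}}` is Cauchy in outer charge but converges in outer charge to no
totally measurable function. -/
theorem cauchy_not_convergent_in_charge
    (f : ℕ → ℕ → ℝ) (hf : f = fun n => (Set.Icc 1 n).indicator (fun _ => (1:ℝ))) :
    (∀ δ : ℝ, 0 < δ →
      Tendsto (fun p : ℕ × ℕ =>
          outerCharge cofinField cofinCharge {k | δ < |f p.1 k - f p.2 k|})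
        atTop (𝓝 0)) ∧
    ¬ ∃ g : ℕ → ℝ, TotallyMeasurable cofinField cofinCharge g ∧
        TendstoInCharge cofinField cofinCharge f g := by
  constructor
  · intro δ hδ
    have hb : ∀ p : ℕ × ℕ,
        outerCharge cofinField cofinCharge {k | δ < |f p.1 k - f p.2 k|} ≤ w (min p.1 p.2) := by
      rintro ⟨n, m⟩
      have hsub : {k | δ < |f n k - f m k|} ⊆ Ioi (min n m) ∩ Iic (max n m) := by
        intro k hk
        simp only [mem_setOf_eq, hf] at hk
        by_contra hknot
        have hiff : (k ∈ Icc 1 n) ↔ (k ∈ Icc 1 m) := by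
          simp only [Set.mem_inter_iff, Set.mem_Ioi, Set.mem_Iic, not_and_or, not_lt,
            not_le] at hknot
          simp only [Set.mem_Icc]; omega
        have heq : (Icc 1 n).indicator (fun _ => (1:ℝ)) k
            = (Icc 1 m).indicator (fun _ => (1:ℝ)) k := by
          rw [Set.indicator_apply, Set.indicator_apply]
          exact if_congr hiff rfl rfl
        rw [heq, sub_self, abs_zero] at hk
        linarith
      calc outerCharge cofinField cofinCharge {k | δ < |f n k - f m k|}
          ≤ cofinCharge (Ioi (min n m) ∩ Iic (max n m)) :=
            outer_le (Or.inl ((Set.finite_Iic _).subset Set.inter_subset_right)) hsub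
        _ ≤ w (min n m) := by
            rw [cofinCharge, if_pos ((Set.finite_Iic _).subset Set.inter_subset_right),
              ← tsum_tail (min n m)]
            exact ENNReal.tsum_le_tsum fun k =>
              Set.indicator_le_indicator_of_subset Set.inter_subset_left (fun a => zero_le) k
    have hmin : Tendsto (fun p : ℕ × ℕ => min p.1 p.2) atTop atTop :=
      tendsto_atTop_atTop.2 fun b => ⟨(b, b), fun p hp => le_min hp.1 hp.2⟩
    have h0 : Tendsto (fun p : ℕ × ℕ => w (min p.1 p.2)) atTop (𝓝 0) :=
      (ENNReal.tendsto_pow_atTop_nhds_zero_of_lt_one (ENNReal.inv_lt_one.2 one_lt_two)).comp hmin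
    exact tendsto_of_tendsto_of_tendsto_of_le_of_le tendsto_const_nhds h0
      (fun p => zero_le) hb
  · rintro ⟨g, -, hconv⟩
    obtain ⟨n0, hn0⟩ := ((hconv (1/4) (by norm_num)).eventually_lt_const
      (show (0:ℝ≥0∞) < 3 by norm_num)).exists
    obtain ⟨B, hB⟩ := (finite_of_outer_lt hn0).bddAbove
    set K := max (max n0 B + 1) 1 with hK
    have hKg : |g K| ≤ 1/4 := by
      have hk1 : K ∉ {k | 1/4 < |f n0 k - g k|} := fun hmem => by
        have := hB hmem; omega
      simp only [mem_setOf_eq, not_lt] at hk1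
      have hzero : f n0 K = 0 := by
        rw [hf]
        exact Set.indicator_of_notMem (by simp [Set.mem_Icc]; omega) _
      rw [hzero, zero_sub, abs_neg] at hk1
      exact hk1
    have hwK : (0:ℝ≥0∞) < w K := ENNReal.pow_pos (by norm_num) K
    obtain ⟨N, hN⟩ := eventually_atTop.1
      ((hconv (1/2) (by norm_num)).eventually_lt_const hwK)
    set n := max N K with hn
    have hmem : K ∈ {k | 1/2 < |f n k - g k|} := by
      have h1 : f n K = 1 := by
        rw [hf]
        exact Set.indicator_of_mem (by simp [Set.mem_Icc]; omega) _
      simp only [mem_setOf_eq, h1]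
      have := abs_sub_abs_le_abs_sub (1:ℝ) (g K)
      rw [abs_one] at this
      linarith
    exact absurd (hN n (le_max_left _ _)) (not_lt.2 (outer_ge_of_mem hmem))
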